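/- arXiv:1910.00422 — 6 statements merged into one kernel-verified Lean document; each statement's English description precedes it below -/
import Mathlib

section
/- Let (X, M, μ) be a measure space, and suppose L^p(μ) ⊆ L^q(μ) for some 1 ≤ p < q ≤ ∞. Then inf{μ(E) : E ∈ M, μ(E) > 0} > 0. -/
open MeasureTheory ENNReal Filter Topology

set_option maxHeartbeats 1000000

theorem stmt_1 {X : Type*} [MeasurableSpace X] (μ : Measure X)
    (p q : ℝ≥0∞) (hp : 1 ≤ p) (hpq : p < q)
    (hincl : ∀ f : X → ℝ, MemLp f p μ → MemLp f q μ) :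
    0 < sInf (μ '' {E : Set X | MeasurableSet E ∧ 0 < μ E}) := by
  by_contra hcon
  rw [not_lt, le_zero_iff] at hcon
  -- basic exponent facts
  have hp0 : p ≠ 0 := (lt_of_lt_of_le zero_lt_one hp).ne'
  have hptop : p ≠ ∞ := hpq.ne_top
  have hq0 : q ≠ 0 := (lt_of_lt_of_le zero_lt_one (hp.trans hpq.le)).ne'
  set pr : ℝ := p.toReal with hprdef
  set qr : ℝ := q.toReal with hqrdef
  have hpr1 : 1 ≤ pr := by
    rw [hprdef, ← ENNReal.toReal_one]
    exact ENNReal.toReal_mono hptop hp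
  have hpr0 : 0 < pr := lt_of_lt_of_le zero_lt_one hpr1
  have hqr0 : 0 ≤ qr := ENNReal.toReal_nonneg
  set δ : ℝ := pr⁻¹ - qr⁻¹ with hδdef
  have hδ0 : 0 < δ := by
    rcases eq_or_ne q ∞ with hq | hq
    · simp [hδdef, hqrdef, hq, inv_pos, hpr0]
    · have hlt : pr < qr := ENNReal.toReal_lt_toReal hptop hq |>.mpr hpq
      have : qr⁻¹ < pr⁻¹ := by
        apply inv_strictAnti₀ hpr0 hlt
      simpa [hδdef] using sub_pos.mpr this
  -- choose the sets
  set base : ℕ → ℝ≥0∞ := fun n => (2 : ℝ≥0∞)⁻¹ ^ n / ((n : ℝ≥0∞) + 1) with hbase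
  have hbase0 : ∀ n, base n ≠ 0 := by
    intro n
    apply ENNReal.div_ne_zero.2
    constructor
    · exact pow_ne_zero n (by simp)
    · exact ENNReal.add_ne_top.2 ⟨ENNReal.natCast_ne_top n, one_ne_top⟩
  have hbasetop : ∀ n, base n ≠ ∞ := by
    intro n
    apply ne_of_lt
    apply ENNReal.div_lt_top
    · exact pow_ne_top (by simp)
    · simp
  set ε : ℕ → ℝ≥0∞ := fun n => base n ^ δ⁻¹ with hε
  have hε0 : ∀ n, 0 < ε n := fun n =>
    ENNReal.rpow_pos (pos_iff_ne_zero.2 (hbase0 n)) (hbasetop n)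
  have hex : ∀ n, ∃ E : Set X, MeasurableSet E ∧ 0 < μ E ∧ μ E < ε n := by
    intro n
    have : sInf (μ '' {E : Set X | MeasurableSet E ∧ 0 < μ E}) < ε n := by
      rw [hcon]; exact hε0 n
    obtain ⟨m, hm, hmlt⟩ := sInf_lt_iff.mp this
    obtain ⟨E, hE, rfl⟩ := hm
    exact ⟨E, hE.1, hE.2, hmlt⟩
  choose E hEm hE0 hEε using hex
  set c : ℕ → ℝ≥0∞ := fun n => μ (E n) with hc
  have hc0 : ∀ n, c n ≠ 0 := fun n => (hE0 n).ne'
  have hctop : ∀ n, c n ≠ ∞ := by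
    intro n
    apply ne_of_lt
    apply lt_of_lt_of_le (hEε n)
    exact le_of_lt (ENNReal.rpow_lt_top_of_nonneg (by positivity) (hbasetop n))
  have hkey1 : ∀ n, c n ^ δ ≤ base n := by
    intro n
    have := ENNReal.rpow_le_rpow (hEε n).le hδ0.le
    rwa [hε, ← ENNReal.rpow_mul, inv_mul_cancel₀ hδ0.ne', ENNReal.rpow_one] at this
  set a : ℕ → ℝ≥0∞ := fun n => ((n : ℝ≥0∞) + 1) * c n ^ (-(qr⁻¹)) with ha
  have han0 : ∀ n, a n ≠ 0 := by
    intro n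
    apply mul_ne_zero (by simp)
    simp [ENNReal.rpow_eq_zero_iff, hc0 n, hctop n]
  have hantop : ∀ n, a n ≠ ∞ := by
    intro n
    apply ENNReal.mul_ne_top (ENNReal.add_ne_top.2 ⟨ENNReal.natCast_ne_top n, one_ne_top⟩)
    simp [ENNReal.rpow_eq_top_iff, hc0 n, hctop n]
  have hkey3 : ∀ n, a n * c n ^ qr⁻¹ = (n : ℝ≥0∞) + 1 := by
    intro n
    rw [ha]
    rw [mul_assoc, ← ENNReal.rpow_add _ _ (hc0 n) (hctop n)]
    simp
  have hkey2 : ∀ n, a n * c n ^ pr⁻¹ ≤ (2 : ℝ≥0∞)⁻¹ ^ n := by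
    intro n
    rw [ha, mul_assoc, ← ENNReal.rpow_add _ _ (hc0 n) (hctop n)]
    have : -qr⁻¹ + pr⁻¹ = δ := by rw [hδdef]; ring
    rw [this]
    calc ((n : ℝ≥0∞) + 1) * c n ^ δ ≤ ((n : ℝ≥0∞) + 1) * base n :=
          mul_le_mul_right (hkey1 n) _
      _ = (2 : ℝ≥0∞)⁻¹ ^ n := by
          rw [hbase, ENNReal.mul_div_cancel (by simp)
            (ENNReal.add_ne_top.2 ⟨ENNReal.natCast_ne_top n, one_ne_top⟩)]
  -- the function
  set g : X → ℝ≥0∞ := fun x => ∑' n, (E n).indicator (fun _ => a n) x with hg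
  have hgmeas : Measurable g :=
    Measurable.ennreal_tsum fun n => measurable_const.indicator (hEm n)
  set f : X → ℝ := fun x => (g x).toReal with hf
  have hfmeas : Measurable f := hgmeas.ennreal_toReal
  set b : ℕ → ℝ := fun n => (a n).toReal with hb
  have hb0 : ∀ n, 0 ≤ b n := fun n => ENNReal.toReal_nonneg
  set fR : ℕ → X → ℝ := fun n => (E n).indicator (fun _ => b n) with hfR
  set S : ℕ → X → ℝ := fun N => ∑ n ∈ Finset.range N, fR n with hS
  set T : ℕ → X → ℝ≥0∞ := fun N x => ∑ n ∈ Finset.range N, (E n).indicator (fun _ => a n) x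
    with hT
  have hTmeas : ∀ N, Measurable (T N) :=
    fun N => Finset.measurable_sum _ fun n _ => measurable_const.indicator (hEm n)
  have hST : ∀ N x, (‖S N x‖₊ : ℝ≥0∞) = T N x := by
    intro N x
    rw [hS, hT]
    simp only [Finset.sum_apply]
    have hnn : 0 ≤ ∑ n ∈ Finset.range N, (E n).indicator (fun _ => b n) x :=
      Finset.sum_nonneg fun n _ => Set.indicator_nonneg (fun _ _ => hb0 n) x
    rw [← enorm_eq_nnnorm, ← ofReal_norm, Real.norm_of_nonneg hnn,
      ENNReal.ofReal_sum_of_nonneg fun n _ => Set.indicator_nonneg (fun _ _ => hb0 n) x]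
    refine Finset.sum_congr rfl fun n _ => ?_
    by_cases hx : x ∈ E n <;>
      simp [hx, hb, ENNReal.ofReal_toReal (hantop n)]
  -- upper bound: partial sums have eLpNorm ≤ 2
  have hSle : ∀ N, eLpNorm (S N) p μ ≤ 2 := by
    intro N
    calc eLpNorm (S N) p μ
        ≤ ∑ n ∈ Finset.range N, eLpNorm (fR n) p μ :=
          eLpNorm_sum_le
            (fun n _ => (measurable_const.indicator (hEm n)).aestronglyMeasurable) hp
      _ ≤ ∑ n ∈ Finset.range N, (2 : ℝ≥0∞)⁻¹ ^ n := by
          apply Finset.sum_le_sum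
          intro n _
          rw [hfR, eLpNorm_indicator_const (hEm n) hp0 hptop]
          have hbn : (‖b n‖₊ : ℝ≥0∞) = a n := by
            rw [← enorm_eq_nnnorm, ← ofReal_norm, Real.norm_of_nonneg (hb0 n), hb,
              ENNReal.ofReal_toReal (hantop n)]
          rw [enorm_eq_nnnorm, hbn, one_div]
          exact hkey2 n
      _ ≤ ∑' n, (2 : ℝ≥0∞)⁻¹ ^ n := ENNReal.sum_le_tsum _
      _ = 2 := by
          rw [ENNReal.tsum_geometric]
          simp [ENNReal.one_sub_inv_two]
  -- lintegral bound for g^pr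
  have hint : ∫⁻ x, g x ^ pr ∂μ ≤ 2 ^ pr := by
    have hpt : ∀ x, g x ^ pr = liminf (fun N => T N x ^ pr) atTop := by
      intro x
      have h1 : Tendsto (fun N => T N x) atTop (𝓝 (g x)) :=
        ENNReal.tendsto_nat_tsum _
      have h2 : Tendsto (fun N => T N x ^ pr) atTop (𝓝 (g x ^ pr)) :=
        (ENNReal.continuous_rpow_const.tendsto _).comp h1
      exact h2.liminf_eq.symm
    calc ∫⁻ x, g x ^ pr ∂μ = ∫⁻ x, liminf (fun N => T N x ^ pr) atTop ∂μ := by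
          apply lintegral_congr; exact hpt
      _ ≤ liminf (fun N => ∫⁻ x, T N x ^ pr ∂μ) atTop :=
          lintegral_liminf_le fun N => (hTmeas N).pow_const pr
      _ ≤ 2 ^ pr := by
          apply liminf_le_of_le
          · isBoundedDefault
          intro u hu
          obtain ⟨N, hN⟩ := hu.exists
          refine hN.trans ?_
          have h1 : ∫⁻ x, T N x ^ pr ∂μ = (eLpNorm (S N) p μ) ^ pr := by
            rw [eLpNorm_eq_lintegral_rpow_enorm_toReal hp0 hptop, one_div,
              ← ENNReal.rpow_mul, inv_mul_cancel₀ hpr0.ne', ENNReal.rpow_one]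
            apply lintegral_congr
            intro x
            rw [enorm_eq_nnnorm, hST]
          rw [h1]
          exact ENNReal.rpow_le_rpow (hSle N) hpr0.le
  -- g is a.e. finite
  have hgfin : ∀ᵐ x ∂μ, g x < ∞ := by
    have h1 : ∀ᵐ x ∂μ, g x ^ pr < ∞ :=
      ae_lt_top (hgmeas.pow_const pr)
        (lt_of_le_of_lt hint (ENNReal.rpow_lt_top_of_nonneg hpr0.le (by simp))).ne
    filter_upwards [h1] with x hx
    exact (ENNReal.rpow_lt_top_iff_of_pos hpr0).mp hx
  -- f is in L^p
  have hfmem : MemLp f p μ := by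
    refine ⟨hfmeas.aestronglyMeasurable, ?_⟩
    rw [eLpNorm_eq_lintegral_rpow_enorm_toReal hp0 hptop]
    have h1 : ∫⁻ x, (‖f x‖₊ : ℝ≥0∞) ^ pr ∂μ ≤ ∫⁻ x, g x ^ pr ∂μ := by
      apply lintegral_mono
      intro x
      apply ENNReal.rpow_le_rpow _ hpr0.le
      rw [hf, ← enorm_eq_nnnorm, ← ofReal_norm, Real.norm_of_nonneg ENNReal.toReal_nonneg]
      exact ENNReal.ofReal_toReal_le
    calc (∫⁻ x, (‖f x‖₊ : ℝ≥0∞) ^ pr ∂μ) ^ (1 / pr)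
        ≤ (2 ^ pr) ^ (1 / pr) :=
          ENNReal.rpow_le_rpow (h1.trans hint) (by positivity)
      _ < ∞ := by
          apply ENNReal.rpow_lt_top_of_nonneg (by positivity)
          exact (ENNReal.rpow_lt_top_of_nonneg hpr0.le (by simp)).ne
  -- f is in L^q, derive contradiction
  have hqmem := hincl f hfmem
  obtain ⟨N, hN⟩ := ENNReal.exists_nat_gt hqmem.2.ne
  -- lower bound for eLpNorm f q
  set s' : Set X := E N ∩ {x | g x < ∞} with hs'
  have hs'meas : MeasurableSet s' :=
    (hEm N).inter (hgmeas measurableSet_Iio)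
  have hs'μ : μ s' = c N := by
    rw [hs']
    apply measure_inter_conull
    rw [Set.compl_setOf]
    exact ae_iff.mp hgfin
  have hmono : ∀ x, ‖s'.indicator (fun _ => b N) x‖ ≤ ‖f x‖ := by
    intro x
    by_cases hx : x ∈ s'
    · rw [Set.indicator_of_mem hx, Real.norm_of_nonneg (hb0 N),
        Real.norm_of_nonneg (ENNReal.toReal_nonneg)]
      have h1 : a N ≤ g x := by
        have := ENNReal.le_tsum (f := fun n => (E n).indicator (fun _ => a n) x) N
        rwa [Set.indicator_of_mem hx.1] at this
      exact ENNReal.toReal_mono hx.2.ne h1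
    · rw [Set.indicator_of_notMem hx]
      simp
  have hlow : ((N : ℝ≥0∞) + 1) ≤ eLpNorm f q μ := by
    have h1 := eLpNorm_mono (p := q) (μ := μ) hmono
    rw [eLpNorm_indicator_const' hs'meas (by rw [hs'μ]; exact hc0 N) hq0] at h1
    have hbn : (‖b N‖₊ : ℝ≥0∞) = a N := by
      rw [← enorm_eq_nnnorm, ← ofReal_norm, Real.norm_of_nonneg (hb0 N), hb,
        ENNReal.ofReal_toReal (hantop N)]
    rw [enorm_eq_nnnorm, hbn, hs'μ, one_div] at h1
    rwa [hkey3 N] at h1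
  have : ((N : ℝ≥0∞) + 1) < (N : ℝ≥0∞) + 1 :=
    lt_of_le_of_lt hlow (lt_of_lt_of_le hN (by simp))
  exact absurd this (lt_irrefl _)
end

section
/- Let (X, M, μ) be a measure space and suppose L^q(μ) ⊆ L^p(μ) for some 1 ≤ p < q < ∞. Then sup{μ(E) : E ∈ M, μ(E) < ∞} < ∞. -/
open MeasureTheory ENNReal

lemma aux_disjoint_sets {X : Type*} [MeasurableSpace X] (μ : Measure X)
    (h2 : ∀ C : ℝ≥0∞, C ≠ ∞ → ∃ E : Set X, MeasurableSet E ∧ μ E < ∞ ∧ C < μ E)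
    (c : ℕ → ℝ≥0∞) (hc : ∀ n, c n ≠ ∞) :
    ∃ F : ℕ → Set X, (∀ n, MeasurableSet (F n)) ∧ Pairwise (Function.onFun Disjoint F) ∧
      (∀ n, μ (F n) < ∞) ∧ ∀ n, c n < μ (F n) := by
  classical
  let T : ℕ → Type _ := fun n => {s : Set X × Set X //
    MeasurableSet s.1 ∧ MeasurableSet s.2 ∧ μ s.2 ≠ ∞ ∧ s.1 ⊆ s.2 ∧ c n < μ s.1}
  let base : T 0 :=
    ⟨((h2 (c 0) (hc 0)).choose, (h2 (c 0) (hc 0)).choose),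
      (h2 (c 0) (hc 0)).choose_spec.1, (h2 (c 0) (hc 0)).choose_spec.1,
      (h2 (c 0) (hc 0)).choose_spec.2.1.ne, subset_rfl, (h2 (c 0) (hc 0)).choose_spec.2.2⟩
  let step : ∀ n, T n → T (n + 1) := fun n t =>
    have hC : c (n + 1) + μ t.1.2 ≠ ∞ := by
      simp [ENNReal.add_ne_top, hc (n+1), t.2.2.2.1]
    let E := (h2 (c (n + 1) + μ t.1.2) hC).choose
    have hEm : MeasurableSet E := (h2 (c (n + 1) + μ t.1.2) hC).choose_spec.1
    have hEfin : μ E < ∞ := (h2 (c (n + 1) + μ t.1.2) hC).choose_spec.2.1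
    have hEc : c (n + 1) + μ t.1.2 < μ E := (h2 (c (n + 1) + μ t.1.2) hC).choose_spec.2.2
    ⟨(E \ t.1.2, E ∪ t.1.2), hEm.diff t.2.2.1, hEm.union t.2.2.1,
      (lt_of_le_of_lt (measure_union_le _ _)
        (ENNReal.add_lt_top.mpr ⟨hEfin, lt_top_iff_ne_top.mpr t.2.2.2.1⟩)).ne,
      fun x hx => Or.inl hx.1, by
        have h1 : μ E ≤ μ (E \ t.1.2) + μ t.1.2 := by
          conv_lhs => rw [← Set.diff_union_inter E t.1.2]
          exact le_trans (measure_union_le _ _) (by gcongr; exact Set.inter_subset_right)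
        exact (ENNReal.add_lt_add_iff_right t.2.2.2.1).mp (lt_of_lt_of_le hEc h1)⟩
  let seq : ∀ n, T n := fun n => Nat.rec base step n
  have hseq : ∀ n, seq (n + 1) = step n (seq n) := fun n => rfl
  have hUsub : ∀ n, (seq n).1.2 ⊆ (seq (n+1)).1.2 := fun n => Set.subset_union_right
  have hFdisj : ∀ n, Disjoint ((seq (n+1)).1.1) ((seq n).1.2) := fun n =>
    Set.disjoint_sdiff_left
  have hUmono : ∀ k n, k ≤ n → (seq k).1.2 ⊆ (seq n).1.2 := by
    intro k n hkn
    induction n with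
    | zero => rw [Nat.le_zero.mp hkn]
    | succ m ih =>
      rcases Nat.lt_or_ge k (m+1) with h | h
      · exact (ih (Nat.lt_succ_iff.mp h)).trans (hUsub m)
      · have : k = m + 1 := le_antisymm hkn h
        subst this; rfl
  refine ⟨fun n => (seq n).1.1, fun n => (seq n).2.1, ?_, fun n =>
    lt_of_le_of_lt (measure_mono (seq n).2.2.2.2.1) (lt_top_iff_ne_top.mpr (seq n).2.2.2.1),
    fun n => (seq n).2.2.2.2.2⟩
  have key : ∀ k m, k < m → Disjoint ((seq m).1.1) ((seq k).1.1) := by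
    intro k m hkm
    obtain ⟨m, rfl⟩ : ∃ m', m = m' + 1 :=
      ⟨m - 1, (Nat.succ_pred_eq_of_pos (Nat.lt_of_le_of_lt (Nat.zero_le k) hkm)).symm⟩
    have h1 : (seq k).1.1 ⊆ (seq m).1.2 :=
      ((seq k).2.2.2.2.1).trans (hUmono k m (Nat.lt_succ_iff.mp hkm))
    exact (hFdisj m).mono_right h1
  intro i j hij
  rcases lt_or_gt_of_ne hij with h | h
  · exact (key i j h).symm
  · exact key j i h

open MeasureTheory ENNReal

lemma aux_lintegral {X : Type*} [MeasurableSpace X] (μ : Measure X)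
    (F : ℕ → Set X) (hFm : ∀ n, MeasurableSet (F n)) (hFd : Pairwise (Function.onFun Disjoint F))
    (a : ℕ → ℝ≥0∞) (ha : ∀ n, a n ≠ ∞) (r : ℝ) (hr : 0 < r) :
    ∫⁻ x, (‖((∑' n, (F n).indicator (fun _ => a n) x).toReal)‖₊ : ℝ≥0∞) ^ r ∂μ
      = ∑' n, a n ^ r * μ (F n) := by
  classical
  set g : X → ℝ≥0∞ := fun x => ∑' n, (F n).indicator (fun _ => a n) x with hg
  have hgval : ∀ n x, x ∈ F n → g x = a n := by
    intro n x hx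
    have h1 : (∑' m, (F m).indicator (fun _ => a m) x) = (F n).indicator (fun _ => a n) x :=
      tsum_eq_single n (fun m hmn => by
        simp [Set.indicator_of_notMem (Set.disjoint_right.mp (hFd hmn) hx)])
    simp [hg, h1, Set.indicator_of_mem hx]
  have hgzero : ∀ x, (∀ n, x ∉ F n) → g x = 0 := by
    intro x hx
    simp only [hg]
    rw [ENNReal.summable.tsum_eq_zero_iff]
    intro n; simp [Set.indicator_of_notMem (hx n)]
  have hpt : ∀ x, (‖(g x).toReal‖₊ : ℝ≥0∞) ^ r
      = ∑' n, (F n).indicator (fun _ => a n ^ r) x := by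
    intro x
    by_cases hx : ∃ n, x ∈ F n
    · obtain ⟨n, hn⟩ := hx
      have h1 : g x = a n := hgval n x hn
      have h2 : (∑' m, (F m).indicator (fun _ => a m ^ r) x) = a n ^ r := by
        rw [tsum_eq_single n (fun m hmn => by
          simp [Set.indicator_of_notMem (Set.disjoint_right.mp (hFd hmn) hn)])]
        simp [Set.indicator_of_mem hn]
      rw [← enorm_eq_nnnorm, Real.enorm_eq_ofReal ENNReal.toReal_nonneg,
        ENNReal.ofReal_toReal (by rw [h1]; exact ha n), h1, h2]
    · push_neg at hx
      rw [hgzero x hx]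
      simp only [ENNReal.toReal_zero, nnnorm_zero, ENNReal.coe_zero,
        ENNReal.zero_rpow_of_pos hr]
      symm
      rw [ENNReal.summable.tsum_eq_zero_iff]
      intro n; simp [Set.indicator_of_notMem (hx n)]
  calc ∫⁻ x, (‖(g x).toReal‖₊ : ℝ≥0∞) ^ r ∂μ
      = ∫⁻ x, ∑' n, (F n).indicator (fun _ => a n ^ r) x ∂μ := lintegral_congr hpt
    _ = ∑' n, ∫⁻ x, (F n).indicator (fun _ => a n ^ r) x ∂μ :=
        lintegral_tsum (fun n => (measurable_const.indicator (hFm n)).aemeasurable)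
    _ = ∑' n, a n ^ r * μ (F n) := by
        congr 1; funext n
        exact lintegral_indicator_const (hFm n) _

open MeasureTheory ENNReal

theorem stmt_4 {X : Type*} [MeasurableSpace X] (μ : Measure X)
    (p q : ℝ≥0∞) (hp : 1 ≤ p) (hpq : p < q) (hq : q < ∞)
    (hincl : ∀ f : X → ℝ, MemLp f q μ → MemLp f p μ) :
    sSup (μ '' {E : Set X | MeasurableSet E ∧ μ E < ∞}) < ∞ := by
  by_contra hsup
  have hsupT : sSup (μ '' {E : Set X | MeasurableSet E ∧ μ E < ∞}) = ∞ := by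
    simpa [lt_top_iff_ne_top] using hsup
  have h2 : ∀ C : ℝ≥0∞, C ≠ ∞ → ∃ E : Set X, MeasurableSet E ∧ μ E < ∞ ∧ C < μ E := by
    intro C hC
    have hlt : C < sSup (μ '' {E : Set X | MeasurableSet E ∧ μ E < ∞}) := by
      rw [hsupT]; exact lt_top_iff_ne_top.mpr hC
    obtain ⟨v, hv, hCv⟩ := lt_sSup_iff.mp hlt
    obtain ⟨E, hE, rfl⟩ := hv
    exact ⟨E, hE.1, hE.2, hCv⟩
  have hp0 : p ≠ 0 := (zero_lt_one.trans_le hp).ne'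
  have hptop : p ≠ ∞ := (hpq.trans hq).ne
  have hq0 : q ≠ 0 := (zero_lt_one.trans_le (hp.trans hpq.le)).ne'
  have hqtop : q ≠ ∞ := hq.ne
  have hpr : 0 < p.toReal := ENNReal.toReal_pos hp0 hptop
  have hqr : 0 < q.toReal := ENNReal.toReal_pos hq0 hqtop
  have hprqr : p.toReal < q.toReal := (ENNReal.toReal_lt_toReal hptop hqtop).mpr hpq
  set pr := p.toReal with hprdef
  set qr := q.toReal with hqrdef
  have hsub : (0:ℝ) < qr - pr := sub_pos.mpr hprqr
  set t : ℝ := pr / qr with htdef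
  have ht0 : 0 < t := div_pos hpr hqr
  have ht1 : t < 1 := (div_lt_one hqr).mpr hprqr
  set c : ℕ → ℝ≥0∞ := fun n => (2:ℝ≥0∞) ^ ((n:ℝ) * pr / (qr - pr)) with hcdef
  have hce : ∀ n : ℕ, (0:ℝ) ≤ (n:ℝ) * pr / (qr - pr) := fun n => by positivity
  have hc : ∀ n, c n ≠ ∞ := fun n =>
    ENNReal.rpow_ne_top_of_nonneg (hce n) (by norm_num)
  have hc1 : ∀ n, 1 ≤ c n := fun n => by
    calc (1:ℝ≥0∞) = 2 ^ (0:ℝ) := by simp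
    _ ≤ c n := ENNReal.rpow_le_rpow_of_exponent_le (by norm_num) (hce n)
  obtain ⟨F, hFm, hFd, hFfin, hFc⟩ := aux_disjoint_sets μ h2 c hc
  set m : ℕ → ℝ≥0∞ := fun n => μ (F n) with hmdef
  have hm0 : ∀ n, m n ≠ 0 := fun n =>
    (lt_of_lt_of_le zero_lt_one ((hc1 n).trans (hFc n).le)).ne'
  have hmtop : ∀ n, m n ≠ ∞ := fun n => (hFfin n).ne
  have h2invtop : (2⁻¹ : ℝ≥0∞) ≠ ∞ := by simp
  set a : ℕ → ℝ≥0∞ := fun n => ((2⁻¹ : ℝ≥0∞) ^ n * (m n)⁻¹) ^ (1/qr) with hadef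
  have hbase_ne_top : ∀ n, (2⁻¹ : ℝ≥0∞) ^ n * (m n)⁻¹ ≠ ∞ := fun n =>
    ENNReal.mul_ne_top (ENNReal.pow_ne_top h2invtop) (ENNReal.inv_ne_top.mpr (hm0 n))
  have ha : ∀ n, a n ≠ ∞ := fun n =>
    ENNReal.rpow_ne_top_of_nonneg (by positivity) (hbase_ne_top n)
  have haq : ∀ n, a n ^ qr * m n = (2⁻¹:ℝ≥0∞) ^ n := by
    intro n
    simp only [hadef]
    rw [← ENNReal.rpow_mul, one_div, inv_mul_cancel₀ hqr.ne', ENNReal.rpow_one,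
      mul_assoc, ENNReal.inv_mul_cancel (hm0 n) (hmtop n), mul_one]
  have hap : ∀ n, 1 ≤ a n ^ pr * m n := by
    intro n
    have e1 : a n ^ pr = ((2:ℝ≥0∞) ^ (-((n:ℝ) * t))) * ((m n) ^ t)⁻¹ := by
      simp only [hadef]
      rw [← ENNReal.rpow_mul]
      have ht' : 1/qr * pr = t := by rw [htdef]; ring
      rw [ht', ENNReal.mul_rpow_of_ne_top (ENNReal.pow_ne_top h2invtop)
        (ENNReal.inv_ne_top.mpr (hm0 n)), ENNReal.inv_rpow]
      congr 1
      rw [← ENNReal.rpow_natCast (2⁻¹ : ℝ≥0∞) n, ← ENNReal.rpow_mul,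
        ← ENNReal.rpow_neg_one 2, ← ENNReal.rpow_mul]
      congr 1
      ring
    have e2 : a n ^ pr * m n = ((2:ℝ≥0∞) ^ (-((n:ℝ) * t))) * (m n) ^ (1 - t) := by
      rw [e1, mul_assoc]
      congr 1
      rw [ENNReal.rpow_sub 1 t (hm0 n) (hmtop n), ENNReal.rpow_one, div_eq_mul_inv, mul_comm]
    have e3 : (c n) ^ (1 - t) = (2:ℝ≥0∞) ^ ((n:ℝ) * t) := by
      rw [hcdef]
      rw [← ENNReal.rpow_mul]
      congr 1
      rw [htdef]
      field_simp
    have e4 : (1:ℝ≥0∞) = ((2:ℝ≥0∞) ^ (-((n:ℝ) * t))) * (2:ℝ≥0∞) ^ ((n:ℝ) * t) := by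
      rw [← ENNReal.rpow_add _ _ (by norm_num) (by norm_num)]
      simp
    rw [e2, e4]
    gcongr
    rw [← e3]
    exact ENNReal.rpow_le_rpow (hFc n).le (by linarith)
  have hmeasg : Measurable (fun x => ∑' n, (F n).indicator (fun _ => a n) x) :=
    Measurable.ennreal_tsum (fun n => measurable_const.indicator (hFm n))
  set f : X → ℝ := fun x => (∑' n, (F n).indicator (fun _ => a n) x).toReal with hfdef
  have hfm : Measurable f := hmeasg.ennreal_toReal
  have hIq := aux_lintegral μ F hFm hFd a ha qr hqr
  have hIp := aux_lintegral μ F hFm hFd a ha pr hpr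
  have hmemq : MemLp f q μ := by
    refine ⟨hfm.aestronglyMeasurable, ?_⟩
    rw [eLpNorm_eq_lintegral_rpow_enorm_toReal hq0 hqtop]
    simp only [hfdef, enorm_eq_nnnorm]
    rw [hIq, tsum_congr haq, ENNReal.tsum_geometric]
    refine ENNReal.rpow_lt_top_of_nonneg (by positivity) ?_
    rw [ENNReal.inv_ne_top]
    have : (2⁻¹ : ℝ≥0∞) < 1 := by
      rw [ENNReal.inv_lt_one]; norm_num
    exact (tsub_pos_iff_lt.mpr this).ne'
  have hmemp := hincl f hmemq
  have hPtop : eLpNorm f p μ = ∞ := by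
    rw [eLpNorm_eq_lintegral_rpow_enorm_toReal hp0 hptop]
    simp only [hfdef, enorm_eq_nnnorm]
    rw [hIp]
    have hsum : (∑' n, a n ^ pr * m n) = ∞ := by
      refine le_antisymm le_top ?_
      calc (⊤:ℝ≥0∞) = ∑' _ : ℕ, (1:ℝ≥0∞) :=
            (ENNReal.tsum_const_eq_top_of_ne_zero one_ne_zero).symm
        _ ≤ _ := ENNReal.tsum_le_tsum hap
    rw [hsum, ENNReal.top_rpow_of_pos (by positivity)]
  exact absurd hmemp.2 (by simp [hPtop])
end

section
/- Let (X, M, μ) be a measure space. If the containment C₀ ⊆ L^p(μ) holds for some 1 ≤ p < ∞, then sup{μ(E) : E ∈ M, μ(E) < ∞} < ∞. -/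
set_option maxHeartbeats 1000000

open MeasureTheory ENNReal

private lemma aux_tail (r : ℕ → ℝ) (N : ℕ) (hs : Summable r)
    (h0 : ∀ k ∈ Finset.range (N+1), r k = 0)
    (hle : ∀ n, r n ≤ (2⁻¹:ℝ)^n) :
    ∑' n, r n ≤ (2⁻¹:ℝ)^N := by
  have hg : Summable fun n : ℕ => (2⁻¹:ℝ)^n := by
    simpa [one_div] using summable_geometric_two
  have hs' : Summable fun n => r (n + (N+1)) := (summable_nat_add_iff (N+1)).2 hs
  rw [← Summable.sum_add_tsum_nat_add (N+1) hs, Finset.sum_eq_zero h0, zero_add]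
  calc ∑' n, r (n + (N+1)) ≤ ∑' n : ℕ, (2⁻¹:ℝ)^(n + (N+1)) := by
        refine Summable.tsum_le_tsum (fun n => hle _) hs' ?_
        exact (summable_nat_add_iff (N+1)).2 hg
    _ = (2⁻¹:ℝ)^(N+1) * ∑' n : ℕ, (2⁻¹:ℝ)^n := by
        simp_rw [pow_add]
        rw [tsum_mul_right, mul_comm]
    _ = (2⁻¹:ℝ)^N := by
        rw [tsum_geometric_inv_two, pow_succ]
        ring

theorem stmt_13 {X : Type*} [MeasurableSpace X] (μ : Measure X)
    (p : ℝ) (hp : 1 ≤ p)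
    (hincl : ∀ f : X → ℝ, MemLp f ∞ μ →
      (∀ ε : ℝ, 0 < ε → ∃ E : Set X, MeasurableSet E ∧ μ E < ∞ ∧
        eLpNorm ((Eᶜ).indicator f) ∞ μ < ENNReal.ofReal ε) →
      MemLp f (ENNReal.ofReal p) μ) :
    sSup (μ '' {E : Set X | MeasurableSet E ∧ μ E < ∞}) < ∞ := by
  by_contra hS
  rw [not_lt, top_le_iff] at hS
  have hp0 : 0 < p := lt_of_lt_of_le one_pos hp
  -- real weights
  set a : ℕ → ℝ := fun n => (2⁻¹ : ℝ) ^ n with ha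
  have hapos : ∀ n, 0 < a n := fun n => pow_pos (by norm_num) n
  -- pick big sets
  have hex : ∀ n : ℕ, ∃ E : Set X, MeasurableSet E ∧ μ E < ∞ ∧
      ENNReal.ofReal ((n : ℝ) / (a n ^ p)) < μ E := by
    intro n
    have h1 : ENNReal.ofReal ((n : ℝ) / (a n ^ p)) <
        sSup (μ '' {E : Set X | MeasurableSet E ∧ μ E < ∞}) := by
      rw [hS]; exact ofReal_lt_top
    obtain ⟨m, ⟨E, hE, rfl⟩, hlt⟩ := lt_sSup_iff.mp h1
    exact ⟨E, hE.1, hE.2, hlt⟩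
  choose E hEm hEfin hEbig using hex
  -- the ENNReal-valued sum
  set g : X → ℝ≥0∞ := fun x => ∑' n : ℕ, (E n).indicator (fun _ => (2⁻¹ : ℝ≥0∞) ^ n) x with hg
  have hgmeas : Measurable g :=
    Measurable.ennreal_tsum fun n => measurable_const.indicator (hEm n)
  have hterm_le : ∀ n x, (E n).indicator (fun _ => (2⁻¹ : ℝ≥0∞) ^ n) x ≤ (2⁻¹ : ℝ≥0∞) ^ n := by
    intro n x
    exact Set.indicator_le_self' (fun _ _ => zero_le) x
  have hterm_ne : ∀ n x, (E n).indicator (fun _ => (2⁻¹ : ℝ≥0∞) ^ n) x ≠ ∞ := by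
    intro n x
    refine (lt_of_le_of_lt (hterm_le n x) ?_).ne
    exact pow_lt_top (by norm_num)
  have htR : ∀ n, ((2⁻¹ : ℝ≥0∞) ^ n).toReal = (2⁻¹ : ℝ) ^ n := by
    intro n
    rw [ENNReal.toReal_pow, ENNReal.toReal_inv]
    norm_num
  have hterm_toReal_le : ∀ n x, ((E n).indicator (fun _ => (2⁻¹ : ℝ≥0∞) ^ n) x).toReal
      ≤ (2⁻¹ : ℝ) ^ n := by
    intro n x
    by_cases hx : x ∈ E n
    · rw [Set.indicator_of_mem hx, htR]
    · rw [Set.indicator_of_notMem hx]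
      simp
  have hgeo : (∑' n : ℕ, (2⁻¹ : ℝ≥0∞) ^ n) = 2 := by
    rw [ENNReal.tsum_geometric]
    norm_num
  have hgle : ∀ x, g x ≤ 2 := by
    intro x
    calc g x ≤ ∑' n : ℕ, (2⁻¹ : ℝ≥0∞) ^ n := ENNReal.tsum_le_tsum fun n => hterm_le n x
    _ = 2 := hgeo
  have hgne : ∀ x, g x ≠ ∞ := fun x => (lt_of_le_of_lt (hgle x) (by norm_num)).ne
  set f : X → ℝ := fun x => (g x).toReal with hf
  have hfmeas : Measurable f := hgmeas.ennreal_toReal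
  have hfnonneg : ∀ x, 0 ≤ f x := fun x => ENNReal.toReal_nonneg
  have hfle2 : ∀ x, f x ≤ 2 := by
    intro x
    have := hgle x
    exact ENNReal.toReal_le_of_le_ofReal (by norm_num) (by simpa using this)
  -- f is in L^∞
  have hfmem : MemLp f ∞ μ := by
    refine memLp_top_of_bound hfmeas.aestronglyMeasurable 2 ?_
    filter_upwards with x
    rw [Real.norm_eq_abs, abs_of_nonneg (hfnonneg x)]
    exact hfle2 x
  -- f is in C₀
  have hC0 : ∀ ε : ℝ, 0 < ε → ∃ F : Set X, MeasurableSet F ∧ μ F < ∞ ∧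
      eLpNorm ((Fᶜ).indicator f) ∞ μ < ENNReal.ofReal ε := by
    intro ε hε
    obtain ⟨N, hN⟩ := exists_pow_lt_of_lt_one (half_pos hε) (by norm_num : (2⁻¹ : ℝ) < 1)
    refine ⟨⋃ k ∈ Finset.range (N + 1), E k, ?_, ?_, ?_⟩
    · exact MeasurableSet.biUnion (Finset.range (N + 1)).countable_toSet fun k _ => hEm k
    · exact (measure_biUnion_lt_top (Finset.range (N + 1)).finite_toSet
        fun k _ => hEfin k)
    · -- bound outside the union
      have hbound : ∀ x, ‖((⋃ k ∈ Finset.range (N + 1), E k)ᶜ).indicator f x‖ ≤ ε / 2 := by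
        intro x
        rw [Real.norm_eq_abs]
        by_cases hx : x ∈ (⋃ k ∈ Finset.range (N + 1), E k)ᶜ
        · rw [Set.indicator_of_mem hx, abs_of_nonneg (hfnonneg x)]
          -- x is outside every E k, k ≤ N
          have hxk : ∀ k < N + 1, x ∉ E k := by
            intro k hk hxE
            exact hx (Set.mem_biUnion (Finset.mem_range.mpr hk) hxE)
          -- pass to the real-valued series
          set r : ℕ → ℝ := fun n => ((E n).indicator (fun _ => (2⁻¹ : ℝ≥0∞) ^ n) x).toReal
            with hr
          have hfx : f x = ∑' n, r n := by
            rw [hf, hg]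
            exact ENNReal.tsum_toReal_eq fun n => hterm_ne n x
          have hgsum : Summable fun n : ℕ => (2⁻¹ : ℝ) ^ n := by
            simpa [one_div] using summable_geometric_two
          have hrs : Summable r :=
            Summable.of_nonneg_of_le (fun n => ENNReal.toReal_nonneg)
              (fun n => hterm_toReal_le n x) hgsum
          have hr0 : ∀ k ∈ Finset.range (N + 1), r k = 0 := by
            intro k hk
            show ((E k).indicator (fun _ => (2⁻¹ : ℝ≥0∞) ^ k) x).toReal = 0
            rw [Set.indicator_of_notMem (hxk k (Finset.mem_range.mp hk))]
            simp
          have htail : f x ≤ (2⁻¹ : ℝ) ^ N := by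
            rw [hfx]
            exact aux_tail r N hrs hr0 fun n => hterm_toReal_le n x
          linarith [hN]
        · rw [Set.indicator_of_notMem hx, abs_zero]
          positivity
      calc eLpNorm (((⋃ k ∈ Finset.range (N + 1), E k)ᶜ).indicator f) ∞ μ
          = eLpNormEssSup (((⋃ k ∈ Finset.range (N + 1), E k)ᶜ).indicator f) μ :=
            eLpNorm_exponent_top
        _ ≤ ENNReal.ofReal (ε / 2) :=
            eLpNormEssSup_le_of_ae_bound (Filter.Eventually.of_forall hbound)
        _ < ENNReal.ofReal ε := by
            rw [ENNReal.ofReal_lt_ofReal_iff hε]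
            linarith
  -- apply the hypothesis
  have hmemp : MemLp f (ENNReal.ofReal p) μ := hincl f hfmem hC0
  have hpne0 : ENNReal.ofReal p ≠ 0 := by
    simp [ENNReal.ofReal_eq_zero, not_le, hp0]
  have hint : Integrable (fun x => ‖f x‖ ^ (ENNReal.ofReal p).toReal) μ :=
    hmemp.integrable_norm_rpow hpne0 ofReal_ne_top
  have htoReal : (ENNReal.ofReal p).toReal = p := ENNReal.toReal_ofReal hp0.le
  rw [htoReal] at hint
  -- the lintegral I is finite
  set I : ℝ≥0∞ := ∫⁻ x, ENNReal.ofReal (‖f x‖ ^ p) ∂μ with hI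
  have hIfin : I < ∞ := by
    have h1 := hint.hasFiniteIntegral
    rw [HasFiniteIntegral] at h1
    refine lt_of_le_of_lt ?_ h1
    exact lintegral_mono fun x => Real.ofReal_le_enorm _
  -- lower bound: f ≥ a n on E n
  have hflb : ∀ n, ∀ x ∈ E n, a n ≤ f x := by
    intro n x hx
    have h1 : (2⁻¹ : ℝ≥0∞) ^ n ≤ g x := by
      have := ENNReal.le_tsum (f := fun m => (E m).indicator (fun _ => (2⁻¹ : ℝ≥0∞) ^ m) x) n
      rwa [Set.indicator_of_mem hx] at this
    have h2 : ((2⁻¹ : ℝ≥0∞) ^ n).toReal ≤ f x := ENNReal.toReal_mono (hgne x) h1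
    calc a n = ((2⁻¹ : ℝ≥0∞) ^ n).toReal := (htR n).symm
      _ ≤ f x := h2
  -- I ≥ n for all n
  have hIlarge : ∀ n : ℕ, (n : ℝ≥0∞) ≤ I := by
    intro n
    have key : ENNReal.ofReal (a n ^ p) * μ (E n) ≤ I := by
      calc ENNReal.ofReal (a n ^ p) * μ (E n)
          = ∫⁻ _ in E n, ENNReal.ofReal (a n ^ p) ∂μ := (setLIntegral_const _ _).symm
        _ ≤ ∫⁻ x in E n, ENNReal.ofReal (‖f x‖ ^ p) ∂μ := by
            refine setLIntegral_mono
              ((hfmeas.norm.pow_const p).ennreal_ofReal) fun x hx => ?_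
            refine ENNReal.ofReal_le_ofReal ?_
            rw [Real.norm_eq_abs, abs_of_nonneg (hfnonneg x)]
            exact Real.rpow_le_rpow (hapos n).le (hflb n x hx) hp0.le
        _ ≤ I := setLIntegral_le_lintegral _ _
    have hbig : ENNReal.ofReal ((n : ℝ) / (a n ^ p)) ≤ μ (E n) := (hEbig n).le
    have hpowpos : 0 < a n ^ p := Real.rpow_pos_of_pos (hapos n) p
    calc (n : ℝ≥0∞) = ENNReal.ofReal (a n ^ p) * ENNReal.ofReal ((n : ℝ) / (a n ^ p)) := by
          rw [← ENNReal.ofReal_mul hpowpos.le]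
          rw [mul_div_cancel₀ _ hpowpos.ne']
          simp
      _ ≤ ENNReal.ofReal (a n ^ p) * μ (E n) := mul_le_mul_right hbig _
      _ ≤ I := key
  obtain ⟨n, hn⟩ := ENNReal.exists_nat_gt hIfin.ne
  exact absurd (hIlarge n) (not_le.mpr hn)
end

section
/- Let (X, M, μ) be a measure space, T a continuous linear functional on the Banach space C₀ (with the L^∞ norm), and for each atom E with 0 < μ(E) < ∞ set a_E = T(χ_E). Then the collection of pairwise disjoint atoms E of finite positive measure with a_E ≠ 0 is countable, and the sum of |a_E| over any countable family of pairwise disjoint such atoms is finite. -/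
open MeasureTheory ENNReal

/-- The set `C₀` of essentially bounded functions vanishing at infinity
relative to `μ`. -/
def C0set {X : Type*} [MeasurableSpace X] (μ : Measure X) : Set (Lp ℝ ∞ μ) :=
  {f : Lp ℝ ∞ μ | ∀ ε : ℝ, 0 < ε → ∃ E : Set X, MeasurableSet E ∧ μ E < ∞ ∧
    eLpNorm ((Eᶜ).indicator (⇑f)) ∞ μ < ENNReal.ofReal ε}

/-- An atom of finite positive measure. -/
def IsFiniteAtom {X : Type*} [MeasurableSpace X] (μ : Measure X) (E : Set X) : Prop :=
  MeasurableSet E ∧ 0 < μ E ∧ μ E < ∞ ∧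
    ∀ F ⊆ E, MeasurableSet F → μ F = 0 ∨ μ F = μ E

section Aux

variable {X : Type*} [MeasurableSpace X] {μ : Measure X}

lemma indicator_mem_C0 {E : Set X} (hE : MeasurableSet E) (hfin : μ E ≠ ∞) (c : ℝ) :
    (indicatorConstLp ∞ hE hfin c : Lp ℝ ∞ μ) ∈ C0set μ := by
  intro ε hε
  refine ⟨E, hE, hfin.lt_top, ?_⟩
  have h0 : (Eᶜ).indicator ⇑(indicatorConstLp ∞ hE hfin c : Lp ℝ ∞ μ) =ᵐ[μ] (0 : X → ℝ) := by
    filter_upwards [indicatorConstLp_coeFn (p := ∞) (hs := hE) (hμs := hfin) (c := c)]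
      with x hx
    by_cases hxE : x ∈ Eᶜ
    · simp only [Set.indicator_of_mem hxE, hx, Pi.zero_apply]
      exact Set.indicator_of_notMem (Set.notMem_of_mem_compl hxE) _
    · simp [Set.indicator_of_notMem hxE]
  rw [eLpNorm_congr_ae h0, eLpNorm_zero]
  exact ENNReal.ofReal_pos.2 hε

lemma coeFn_sum_smul {ι : Type*} (F : Finset ι) (cc : ι → ℝ) (h : ι → Lp ℝ ∞ μ)
    (φ : ι → X → ℝ) (hφ : ∀ i ∈ F, ⇑(h i) =ᵐ[μ] φ i) :
    ⇑(∑ i ∈ F, cc i • h i) =ᵐ[μ] fun x => ∑ i ∈ F, cc i * φ i x := by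
  classical
  induction F using Finset.cons_induction with
  | empty => simp; exact Lp.coeFn_zero ℝ ∞ μ
  | cons i s hi ih =>
    rw [Finset.sum_cons]
    have h1 := Lp.coeFn_add (cc i • h i) (∑ j ∈ s, cc j • h j)
    have h2 := Lp.coeFn_smul (cc i) (h i)
    have h3 := ih (fun j hj => hφ j (Finset.mem_cons_of_mem hj))
    filter_upwards [h1, h2, h3, hφ i (Finset.mem_cons_self i s)] with x hx1 hx2 hx3 hx4
    simp only [hx1, Pi.add_apply, hx2, Pi.smul_apply, smul_eq_mul, hx3, hx4,
      Finset.sum_cons]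

lemma sum_abs_le_opNorm {S : Submodule ℝ (Lp ℝ ∞ μ)} (hS : (S : Set (Lp ℝ ∞ μ)) = C0set μ)
    (T : S →L[ℝ] ℝ) (a : Set X → ℝ)
    (ha : ∀ E : Set X, IsFiniteAtom μ E → ∀ g : S,
      (⇑(g : Lp ℝ ∞ μ) =ᵐ[μ] E.indicator (fun _ => (1 : ℝ))) → a E = T g)
    (F : Finset (Set X)) (hF : ∀ E ∈ F, IsFiniteAtom μ E)
    (hd : (↑F : Set (Set X)).Pairwise (Disjoint : Set X → Set X → Prop)) :
    ∑ E ∈ F, |a E| ≤ ‖T‖ := by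
  classical
  have memS : ∀ {E : Set X} (h : IsFiniteAtom μ E),
      (indicatorConstLp ∞ h.1 h.2.2.1.ne (1 : ℝ) : Lp ℝ ∞ μ) ∈ S := by
    intro E h
    rw [← SetLike.mem_coe, hS]
    exact indicator_mem_C0 h.1 h.2.2.1.ne 1
  set c : Set X → ℝ := fun E => if a E < 0 then -1 else 1 with hc
  set g : Set X → S := fun E =>
    if h : IsFiniteAtom μ E then ⟨_, memS h⟩ else 0 with hg
  have hgcoe : ∀ E ∈ F,
      ⇑((g E : S) : Lp ℝ ∞ μ) =ᵐ[μ] E.indicator (fun _ => (1 : ℝ)) := by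
    intro E hE
    simp only [hg, dif_pos (hF E hE)]
    exact indicatorConstLp_coeFn
  have haT : ∀ E ∈ F, a E = T (g E) := fun E hE => ha E (hF E hE) (g E) (hgcoe E hE)
  set f : S := ∑ E ∈ F, c E • g E with hf
  have hTf : T f = ∑ E ∈ F, |a E| := by
    rw [hf, map_sum]
    refine Finset.sum_congr rfl fun E hE => ?_
    rw [_root_.map_smul, smul_eq_mul, ← haT E hE, hc]
    by_cases h : a E < 0
    · simp [h, abs_of_neg h]
    · simp [h, abs_of_nonneg (not_lt.mp h)]
  have hcoe : ((f : S) : Lp ℝ ∞ μ) = ∑ E ∈ F, c E • ((g E : S) : Lp ℝ ∞ μ) := by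
    rw [hf]
    simp
  have hfcoe : ⇑((f : S) : Lp ℝ ∞ μ) =ᵐ[μ]
      fun x => ∑ E ∈ F, c E * E.indicator (fun _ => (1 : ℝ)) x := by
    rw [hcoe]
    exact coeFn_sum_smul F c (fun E => ((g E : S) : Lp ℝ ∞ μ)) _ hgcoe
  have hpt : ∀ x, |∑ E ∈ F, c E * E.indicator (fun _ => (1 : ℝ)) x| ≤ 1 := by
    intro x
    by_cases hx : ∃ E ∈ F, x ∈ E
    · obtain ⟨E0, hE0, hxE0⟩ := hx
      have hsum : ∑ E ∈ F, c E * E.indicator (fun _ => (1 : ℝ)) x = c E0 := by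
        rw [Finset.sum_eq_single_of_mem E0 hE0]
        · simp [Set.indicator_of_mem hxE0]
        · intro E hE hne
          have hdis : Disjoint E E0 :=
            hd (Finset.mem_coe.mpr hE) (Finset.mem_coe.mpr hE0) hne
          have hxE : x ∉ E := Set.disjoint_right.mp hdis hxE0
          simp [Set.indicator_of_notMem hxE]
      rw [hsum, hc]
      by_cases h : a E0 < 0 <;> simp [h]
    · push_neg at hx
      rw [Finset.sum_eq_zero fun E hE => by
        simp [Set.indicator_of_notMem (hx E hE)]]
      norm_num
  have hb : ∀ᵐ x ∂μ, ‖⇑((f : S) : Lp ℝ ∞ μ) x‖ ≤ 1 := by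
    filter_upwards [hfcoe] with x hx
    rw [hx, Real.norm_eq_abs]
    exact hpt x
  have hsnorm : eLpNorm (⇑((f : S) : Lp ℝ ∞ μ)) ∞ μ ≤ ENNReal.ofReal 1 := by
    rw [eLpNorm_exponent_top]
    exact eLpNormEssSup_le_of_ae_bound hb
  have hnorm : ‖((f : S) : Lp ℝ ∞ μ)‖ ≤ 1 := by
    rw [Lp.norm_def]
    calc (eLpNorm (⇑((f : S) : Lp ℝ ∞ μ)) ∞ μ).toReal
        ≤ (ENNReal.ofReal 1).toReal := ENNReal.toReal_mono (by simp) hsnorm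
      _ = 1 := by simp
  have hnormS : ‖f‖ ≤ 1 := hnorm
  calc ∑ E ∈ F, |a E| = T f := hTf.symm
    _ ≤ |T f| := le_abs_self _
    _ ≤ ‖T‖ * ‖f‖ := T.le_opNorm f
    _ ≤ ‖T‖ * 1 := mul_le_mul_of_nonneg_left hnormS (norm_nonneg T)
    _ = ‖T‖ := mul_one _

end Aux

theorem stmt_16 {X : Type*} [MeasurableSpace X] (μ : Measure X)
    (S : Submodule ℝ (Lp ℝ ∞ μ)) (hS : (S : Set (Lp ℝ ∞ μ)) = C0set μ)
    (T : S →L[ℝ] ℝ)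
    (a : Set X → ℝ)
    (ha : ∀ E : Set X, IsFiniteAtom μ E → ∀ g : S,
      (⇑(g : Lp ℝ ∞ μ) =ᵐ[μ] E.indicator (fun _ => (1 : ℝ))) → a E = T g) :
    (∀ 𝒜 : Set (Set X), (∀ E ∈ 𝒜, IsFiniteAtom μ E ∧ a E ≠ 0) →
      𝒜.Pairwise (Disjoint : Set X → Set X → Prop) → 𝒜.Countable) ∧
    (∀ E : ℕ → Set X, (∀ n, IsFiniteAtom μ (E n)) →
      Pairwise (Function.onFun Disjoint E) → Summable fun n => |a (E n)|) := by
  classical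
  have key : ∀ F : Finset (Set X), (∀ E ∈ F, IsFiniteAtom μ E) →
      (↑F : Set (Set X)).Pairwise (Disjoint : Set X → Set X → Prop) →
      ∑ E ∈ F, |a E| ≤ ‖T‖ := fun F => sum_abs_le_opNorm hS T a ha F
  constructor
  · intro 𝒜 h𝒜 hdisj
    have hcover : 𝒜 = ⋃ n : ℕ, {E ∈ 𝒜 | 1 / ((n : ℝ) + 1) ≤ |a E|} := by
      ext E
      simp only [Set.mem_iUnion, Set.mem_setOf_eq]
      constructor
      · intro hE
        have hpos : 0 < |a E| := abs_pos.2 (h𝒜 E hE).2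
        obtain ⟨n, hn⟩ := exists_nat_one_div_lt hpos
        exact ⟨n, hE, hn.le⟩
      · rintro ⟨n, h, -⟩
        exact h
    rw [hcover]
    refine Set.countable_iUnion fun n => Set.Finite.countable ?_
    rw [← Set.not_infinite]
    intro hinf
    set δ : ℝ := 1 / ((n : ℝ) + 1) with hδ
    have hδpos : 0 < δ := by positivity
    obtain ⟨t, hts, hcard⟩ := hinf.exists_subset_card_eq (⌈‖T‖ / δ⌉₊ + 1)
    have hsub : ∀ E ∈ t, E ∈ 𝒜 ∧ δ ≤ |a E| := by
      intro E hE
      obtain ⟨h1, h2⟩ := hts hE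
      exact ⟨h1, h2⟩
    have hle : ∑ E ∈ t, |a E| ≤ ‖T‖ :=
      key t (fun E hE => (h𝒜 E (hsub E hE).1).1)
        (hdisj.mono fun E hE => (hsub E (Finset.mem_coe.mp hE)).1)
    have hge : (t.card : ℝ) * δ ≤ ∑ E ∈ t, |a E| := by
      calc (t.card : ℝ) * δ = ∑ _E ∈ t, δ := by rw [Finset.sum_const, nsmul_eq_mul]
        _ ≤ ∑ E ∈ t, |a E| := Finset.sum_le_sum fun E hE => (hsub E hE).2
    have hlt : ‖T‖ < (t.card : ℝ) * δ := by
      rw [hcard]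
      have h1 : ‖T‖ / δ ≤ (⌈‖T‖ / δ⌉₊ : ℝ) := Nat.le_ceil _
      have h2 : (⌈‖T‖ / δ⌉₊ : ℝ) < (⌈‖T‖ / δ⌉₊ + 1 : ℕ) := by push_cast; linarith
      have : ‖T‖ / δ < ((⌈‖T‖ / δ⌉₊ + 1 : ℕ) : ℝ) := lt_of_le_of_lt h1 h2
      calc ‖T‖ = (‖T‖ / δ) * δ := by field_simp
        _ < ((⌈‖T‖ / δ⌉₊ + 1 : ℕ) : ℝ) * δ := by
            exact mul_lt_mul_of_pos_right this hδpos
    linarith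
  · intro E hE hd
    have hinj : Function.Injective E := by
      intro m n hmn
      by_contra h
      have hdis := hd h
      rw [Function.onFun, hmn] at hdis
      have hbot : E n = ⊥ := disjoint_self.mp hdis
      have := (hE n).2.1
      rw [hbot] at this
      simp at this
    refine summable_of_sum_le (c := ‖T‖) (fun n => abs_nonneg _) fun u => ?_
    have : ∑ n ∈ u, |a (E n)| = ∑ s ∈ u.image E, |a s| := by
      rw [Finset.sum_image fun m _ n _ h => hinj h]
    rw [this]
    refine key (u.image E) ?_ ?_
    · intro s hs
      obtain ⟨n, -, rfl⟩ := Finset.mem_image.mp hs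
      exact hE n
    · intro s hs t ht hst
      obtain ⟨m, -, rfl⟩ := Finset.mem_image.mp (Finset.mem_coe.mp hs)
      obtain ⟨n, -, rfl⟩ := Finset.mem_image.mp (Finset.mem_coe.mp ht)
      exact hd fun hmn => hst (by rw [hmn])
end

section
/- Let (X, M, μ) be a measure space with inf{μ(E) : μ(E) > 0} > 0. Then every f ∈ L^1(μ) defines a continuous linear functional T on C₀ by T(g) = ∫ f·g dμ, and ‖T‖ = ‖f‖_1. -/
open MeasureTheory ENNReal Filter Topology

theorem stmt_17 {X : Type*} [MeasurableSpace X] (μ : Measure X)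
    (hinf : 0 < sInf (μ '' {E : Set X | MeasurableSet E ∧ 0 < μ E}))
    (S : Submodule ℝ (Lp ℝ ∞ μ)) (hS : (S : Set (Lp ℝ ∞ μ)) = C0set μ)
    (f : X → ℝ) (hf : MemLp f 1 μ) :
    ∃ T : S →L[ℝ] ℝ,
      (∀ g : S, T g = ∫ x, f x * (g : Lp ℝ ∞ μ) x ∂μ) ∧
      ‖T‖ = ∫ x, |f x| ∂μ := by
  classical
  have hf1 : Integrable f μ := memLp_one_iff_integrable.mp hf
  -- a.e. bound for L∞ elements
  have hb : ∀ g : Lp ℝ ∞ μ, ∀ᵐ x ∂μ, ‖g x‖ ≤ ‖g‖ := by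
    intro g
    have h1 := enorm_ae_le_eLpNormEssSup (⇑g) μ
    have hlt : eLpNormEssSup (⇑g) μ < ∞ := by
      rw [← eLpNorm_exponent_top]; exact Lp.eLpNorm_lt_top g
    filter_upwards [h1] with x hx
    rw [Lp.norm_def, eLpNorm_exponent_top]
    calc ‖g x‖ = ((‖g x‖₊ : ℝ≥0∞)).toReal := by simp
      _ ≤ (eLpNormEssSup (⇑g) μ).toReal := ENNReal.toReal_mono hlt.ne hx
  have key : ∀ g : Lp ℝ ∞ μ, Integrable (fun x => f x * g x) μ := by
    intro g
    have := hf1.bdd_mul (c := ‖g‖) (Lp.aestronglyMeasurable g) (hb g)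
    refine this.congr (Eventually.of_forall fun x => mul_comm _ _)
  -- the linear map
  let L : S →ₗ[ℝ] ℝ :=
  { toFun := fun g => ∫ x, f x * (g : Lp ℝ ∞ μ) x ∂μ
    map_add' := by
      intro g h
      have hae : (((g + h : S) : Lp ℝ ∞ μ) : X → ℝ) =ᵐ[μ]
          ⇑(g : Lp ℝ ∞ μ) + ⇑(h : Lp ℝ ∞ μ) := by
        rw [Submodule.coe_add]; exact Lp.coeFn_add _ _
      have h1 : ∫ x, f x * ((g + h : S) : Lp ℝ ∞ μ) x ∂μ
          = ∫ x, (f x * (g : Lp ℝ ∞ μ) x + f x * (h : Lp ℝ ∞ μ) x) ∂μ := by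
        refine integral_congr_ae ?_
        filter_upwards [hae] with x hx
        rw [hx]; ring_nf; rw [Pi.add_apply]; ring
      simp only [h1, integral_add (key _) (key _)]
    map_smul' := by
      intro c g
      have hae : (((c • g : S) : Lp ℝ ∞ μ) : X → ℝ) =ᵐ[μ]
          c • ⇑(g : Lp ℝ ∞ μ) := by
        rw [Submodule.coe_smul]; exact Lp.coeFn_smul _ _
      have h1 : ∫ x, f x * ((c • g : S) : Lp ℝ ∞ μ) x ∂μ
          = ∫ x, c • (f x * (g : Lp ℝ ∞ μ) x) ∂μ := by
        refine integral_congr_ae ?_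
        filter_upwards [hae] with x hx
        rw [hx, Pi.smul_apply, smul_eq_mul, smul_eq_mul]; ring
      simp only [h1, integral_smul, RingHom.id_apply]
 }
  have hL : ∀ g : S, ‖L g‖ ≤ (∫ x, |f x| ∂μ) * ‖g‖ := by
    intro g
    have h1 : ‖L g‖ ≤ ∫ x, ‖f x * (g : Lp ℝ ∞ μ) x‖ ∂μ :=
      norm_integral_le_integral_norm _
    refine h1.trans ?_
    have h2 : ∫ x, ‖f x * (g : Lp ℝ ∞ μ) x‖ ∂μ
        ≤ ∫ x, |f x| * ‖(g : Lp ℝ ∞ μ)‖ ∂μ := by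
      refine integral_mono_ae (key _).norm (hf1.abs.mul_const _) ?_
      filter_upwards [hb (g : Lp ℝ ∞ μ)] with x hx
      rw [norm_mul, Real.norm_eq_abs]
      exact mul_le_mul_of_nonneg_left hx (abs_nonneg _)
    refine h2.trans ?_
    rw [integral_mul_const]
    exact le_of_eq rfl
  have hfabs_nonneg : 0 ≤ ∫ x, |f x| ∂μ := integral_nonneg fun x => abs_nonneg _
  refine ⟨L.mkContinuous _ hL, fun g => rfl, ?_⟩
  set T := L.mkContinuous _ hL with hT
  refine le_antisymm (L.mkContinuous_norm_le hfabs_nonneg hL) ?_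
  -- lower bound
  set f' := hf.1.mk f with hf'def
  have hf'm : StronglyMeasurable f' := hf.1.stronglyMeasurable_mk
  have hff' : f =ᵐ[μ] f' := hf.1.ae_eq_mk
  have hf'i : Integrable f' μ := hf1.congr hff'
  let s : X → ℝ := fun x => if 0 ≤ f' x then 1 else -1
  have hsm : Measurable s :=
    Measurable.ite (measurableSet_le measurable_const hf'm.measurable)
      measurable_const measurable_const
  let E : ℕ → Set X := fun n => {x | ((n : ℝ) + 1)⁻¹ ≤ |f' x|}
  have hEm : ∀ n, MeasurableSet (E n) := fun n =>
    measurableSet_le measurable_const hf'm.measurable.abs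
  have hEfin : ∀ n, μ (E n) < ∞ := by
    intro n
    have := hf'i.measure_norm_ge_lt_top (ε := ((n : ℝ) + 1)⁻¹) (by positivity)
    simpa [Real.norm_eq_abs] using this
  let gfun : ℕ → X → ℝ := fun n => (E n).indicator s
  have hgb : ∀ n x, ‖gfun n x‖ ≤ 1 := by
    intro n x
    rw [Real.norm_eq_abs]
    by_cases hx : x ∈ E n
    · simp only [gfun, Set.indicator_of_mem hx, s]
      split <;> norm_num
    · simp [gfun, Set.indicator_of_notMem hx]
  have hgm : ∀ n, MemLp (gfun n) ∞ μ := fun n =>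
    memLp_top_of_bound ((hsm.indicator (hEm n)).aestronglyMeasurable) 1
      (Eventually.of_forall (hgb n))
  let gl : ℕ → Lp ℝ ∞ μ := fun n => (hgm n).toLp _
  have hglS : ∀ n, gl n ∈ S := by
    intro n
    rw [← SetLike.mem_coe, hS]
    intro ε hε
    refine ⟨E n, hEm n, hEfin n, ?_⟩
    have h0 : (E n)ᶜ.indicator (⇑(gl n)) =ᵐ[μ] 0 := by
      filter_upwards [(hgm n).coeFn_toLp] with x hx
      by_cases hx2 : x ∈ (E n)ᶜ
      · rw [Set.indicator_of_mem hx2, hx]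
        simp [gfun, Set.indicator_of_notMem (Set.notMem_of_mem_compl hx2)]
      · simp [Set.indicator_of_notMem hx2]
    rw [eLpNorm_congr_ae h0, eLpNorm_zero]
    exact ENNReal.ofReal_pos.mpr hε
  have hglnorm : ∀ n, ‖gl n‖ ≤ 1 := by
    intro n
    rw [Lp.norm_def, eLpNorm_congr_ae ((hgm n).coeFn_toLp), eLpNorm_exponent_top]
    have h1 : eLpNormEssSup (gfun n) μ ≤ ENNReal.ofReal 1 :=
      eLpNormEssSup_le_of_ae_bound (Eventually.of_forall (hgb n))
    calc (eLpNormEssSup (gfun n) μ).toReal ≤ (ENNReal.ofReal 1).toReal :=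
          ENNReal.toReal_mono ENNReal.ofReal_ne_top h1
      _ = 1 := by simp
  have hTg : ∀ n, T ⟨gl n, hglS n⟩ = ∫ x, (E n).indicator (fun x => |f' x|) x ∂μ := by
    intro n
    show (∫ x, f x * (gl n) x ∂μ) = _
    refine integral_congr_ae ?_
    filter_upwards [hff', (hgm n).coeFn_toLp] with x h1 h2
    rw [h2, h1]
    by_cases hx : x ∈ E n
    · rw [Set.indicator_of_mem hx]
      simp only [gfun, Set.indicator_of_mem hx, s]
      by_cases h0 : 0 ≤ f' x
      · rw [if_pos h0, abs_of_nonneg h0]; ring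
      · rw [if_neg h0, abs_of_neg (lt_of_not_ge h0)]; ring
    · simp [gfun, Set.indicator_of_notMem hx]
  have hle : ∀ n, ∫ x, (E n).indicator (fun x => |f' x|) x ∂μ ≤ ‖T‖ := by
    intro n
    rw [← hTg n]
    calc T ⟨gl n, hglS n⟩ ≤ ‖T ⟨gl n, hglS n⟩‖ := le_abs_self _
      _ ≤ ‖T‖ * ‖(⟨gl n, hglS n⟩ : S)‖ := T.le_opNorm _
      _ ≤ ‖T‖ * 1 := by
          refine mul_le_mul_of_nonneg_left ?_ (norm_nonneg T)
          exact hglnorm n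
      _ = ‖T‖ := mul_one _
  -- convergence
  have htend : Tendsto (fun n => ∫ x, (E n).indicator (fun x => |f' x|) x ∂μ)
      atTop (𝓝 (∫ x, |f' x| ∂μ)) := by
    refine tendsto_integral_of_dominated_convergence (fun x => |f' x|)
      (fun n => ((hf'm.measurable.abs).indicator (hEm n)).aestronglyMeasurable)
      hf'i.abs ?_ ?_
    · intro n
      refine Eventually.of_forall fun x => ?_
      rw [Real.norm_eq_abs]
      by_cases hx : x ∈ E n
      · rw [Set.indicator_of_mem hx, abs_abs]
      · rw [Set.indicator_of_notMem hx]; simp [abs_nonneg]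
    · refine Eventually.of_forall fun x => ?_
      by_cases h0 : f' x = 0
      · have : ∀ n, (E n).indicator (fun x => |f' x|) x = |f' x| := by
          intro n
          by_cases hx : x ∈ E n
          · rw [Set.indicator_of_mem hx]
          · rw [Set.indicator_of_notMem hx, h0, abs_zero]
        simp only [this]
        exact tendsto_const_nhds
      · have habs : 0 < |f' x| := abs_pos.mpr h0
        obtain ⟨N, hN⟩ := exists_nat_gt (|f' x|⁻¹)
        refine Tendsto.congr' ?_ (tendsto_const_nhds (x := |f' x|))
        refine eventually_atTop.mpr ⟨N, fun n hn => ?_⟩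
        have hx : x ∈ E n := by
          have h1 : |f' x|⁻¹ < (n : ℝ) + 1 := by
            calc |f' x|⁻¹ < N := hN
              _ ≤ (n : ℝ) := by exact_mod_cast hn
              _ ≤ (n : ℝ) + 1 := by linarith
          show ((n : ℝ) + 1)⁻¹ ≤ |f' x|
          rw [inv_le_comm₀ (by positivity) habs]
          exact le_of_lt h1
        exact ((Set.indicator_of_mem hx (fun y => |f' y|))).symm
  have hfin : ∫ x, |f' x| ∂μ ≤ ‖T‖ :=
    le_of_tendsto htend (Eventually.of_forall hle)
  have heq : ∫ x, |f x| ∂μ = ∫ x, |f' x| ∂μ := by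
    refine integral_congr_ae ?_
    filter_upwards [hff'] with x hx
    rw [hx]
  rw [heq]
  exact hfin
end

section
/- Let (X, M, μ) be a measure space. The condition sup{μ(E) : E ∈ M, μ(E) < ∞} < ∞ holds if and only if X can be written as a disjoint union X = E₁ ∪ E₂ of measurable sets where μ(E₁) < ∞ and either μ(E₂) = 0 or E₂ is an atom of infinite measure. -/
open MeasureTheory ENNReal

theorem stmt_18 {X : Type*} [MeasurableSpace X] (μ : Measure X) :
    sSup (μ '' {E : Set X | MeasurableSet E ∧ μ E < ∞}) < ∞ ↔
    ∃ E₁ E₂ : Set X, MeasurableSet E₁ ∧ MeasurableSet E₂ ∧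
      E₁ ∪ E₂ = Set.univ ∧ E₁ ∩ E₂ = ∅ ∧ μ E₁ < ∞ ∧
      (μ E₂ = 0 ∨ (μ E₂ = ∞ ∧ ∀ F ⊆ E₂, MeasurableSet F → μ F = 0 ∨ μ F = ∞)) := by
  set S := μ '' {E : Set X | MeasurableSet E ∧ μ E < ∞} with hSdef
  constructor
  · intro hs
    set s := sSup S with hsdef
    have hch : ∀ n : ℕ, ∃ A : Set X, MeasurableSet A ∧ μ A < ∞ ∧
        s ≤ μ A + ((n : ℝ≥0∞) + 1)⁻¹ := by
      intro n
      by_cases h : s ≤ ((n : ℝ≥0∞) + 1)⁻¹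
      · exact ⟨∅, MeasurableSet.empty, by simp, by rw [measure_empty, zero_add]; exact h⟩
      · push_neg at h
        have hε : (0 : ℝ≥0∞) < ((n : ℝ≥0∞) + 1)⁻¹ := by
          simp [ENNReal.inv_pos]
        have h0 : s ≠ 0 := fun h0 => absurd h (by simp [h0])
        have hlt : s - ((n : ℝ≥0∞) + 1)⁻¹ < s :=
          ENNReal.sub_lt_self hs.ne h0 hε.ne'
        obtain ⟨a, haS, hlt'⟩ := lt_sSup_iff.mp hlt
        obtain ⟨A, ⟨hAm, hAf⟩, rfl⟩ := haS
        exact ⟨A, hAm, hAf, ((ENNReal.sub_lt_iff_lt_right (by simp) h.le).mp hlt').le⟩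
    choose E hEm hEf hEs using hch
    set E₁ : Set X := ⋃ n, E n with hE₁def
    have hE₁m : MeasurableSet E₁ := MeasurableSet.iUnion hEm
    have hE₁le : μ E₁ ≤ s := by
      rw [hE₁def, measure_iUnion_eq_iSup_accumulate]
      refine iSup_le fun n => le_sSup ⟨Set.accumulate E n, ⟨?_, ?_⟩, rfl⟩
      · rw [Set.accumulate_def]
        exact MeasurableSet.biUnion (Set.to_countable _) fun i _ => hEm i
      · rw [Set.accumulate_def]
        exact measure_biUnion_lt_top (Set.finite_le_nat n) fun i _ => hEf i
    have hE₁f : μ E₁ < ∞ := lt_of_le_of_lt hE₁le hs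
    -- key claim: finite-measure measurable subsets of E₁ᶜ are null
    have hnull : ∀ F : Set X, F ⊆ E₁ᶜ → MeasurableSet F → μ F < ∞ → μ F = 0 := by
      intro F hFsub hFm hFf
      have hdisj : Disjoint E₁ F := by
        rw [Set.disjoint_iff_inter_eq_empty]
        ext x
        simp only [Set.mem_inter_iff, Set.mem_empty_iff_false, iff_false, not_and]
        exact fun hx hxF => hFsub hxF hx
      have hunion : μ (E₁ ∪ F) = μ E₁ + μ F := measure_union hdisj hFm
      have hmem : μ (E₁ ∪ F) ≤ s :=
        le_sSup ⟨E₁ ∪ F, ⟨hE₁m.union hFm, by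
          rw [hunion]; exact ENNReal.add_lt_top.mpr ⟨hE₁f, hFf⟩⟩, rfl⟩
      have hbound : ∀ n : ℕ, μ F ≤ ((n : ℝ≥0∞) + 1)⁻¹ := by
        intro n
        have h1 : s ≤ μ E₁ + ((n : ℝ≥0∞) + 1)⁻¹ :=
          (hEs n).trans (add_le_add_left (measure_mono (Set.subset_iUnion E n)) _)
        have h2 : μ E₁ + μ F ≤ μ E₁ + ((n : ℝ≥0∞) + 1)⁻¹ := by
          calc μ E₁ + μ F = μ (E₁ ∪ F) := hunion.symm
            _ ≤ s := hmem
            _ ≤ _ := h1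
        exact (ENNReal.add_le_add_iff_left hE₁f.ne).mp h2
      refine le_antisymm (ENNReal.le_of_forall_pos_le_add fun ε hε _ => ?_) zero_le
      obtain ⟨n, hn⟩ := ENNReal.exists_inv_nat_lt (by exact_mod_cast hε.ne' : ((ε : ℝ≥0∞)) ≠ 0)
      calc μ F ≤ ((n : ℝ≥0∞) + 1)⁻¹ := hbound n
        _ ≤ (n : ℝ≥0∞)⁻¹ := ENNReal.inv_le_inv' le_self_add
        _ ≤ ε := hn.le
        _ = 0 + ε := (zero_add _).symm
    refine ⟨E₁, E₁ᶜ, hE₁m, hE₁m.compl, Set.union_compl_self E₁,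
      Set.inter_compl_self E₁, hE₁f, ?_⟩
    by_cases hinf : μ E₁ᶜ = ∞
    · refine Or.inr ⟨hinf, fun F hF hFm => ?_⟩
      rcases lt_or_eq_of_le (le_top : μ F ≤ ∞) with hFf | hFf
      · exact Or.inl (hnull F hF hFm hFf)
      · exact Or.inr hFf
    · exact Or.inl (hnull E₁ᶜ subset_rfl hE₁m.compl (lt_top_iff_ne_top.mpr hinf))
  · rintro ⟨E₁, E₂, h1m, h2m, hU, hI, h1f, hdisj⟩
    refine lt_of_le_of_lt (sSup_le ?_) h1f
    rintro a ⟨Ε, ⟨hEm, hEf⟩, rfl⟩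
    have hsub : Ε \ E₁ ⊆ E₂ := by
      intro x hx
      have : x ∈ E₁ ∪ E₂ := hU ▸ Set.mem_univ x
      exact this.resolve_left hx.2
    have hdiff0 : μ (Ε \ E₁) = 0 := by
      rcases hdisj with h0 | ⟨_, hatom⟩
      · exact measure_mono_null hsub h0
      · rcases hatom (Ε \ E₁) hsub (hEm.diff h1m) with h | h
        · exact h
        · have hfin : μ (Ε \ E₁) < ⊤ := (measure_mono Set.diff_subset).trans_lt hEf
          exact absurd h hfin.ne
    calc μ Ε = μ (Ε ∩ E₁) + μ (Ε \ E₁) := (measure_inter_add_diff Ε h1m).symm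
      _ = μ (Ε ∩ E₁) := by rw [hdiff0, add_zero]
      _ ≤ μ E₁ := measure_mono Set.inter_subset_right
end
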